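/- arXiv:1404.2394 — 5 statements merged into one kernel-verified Lean document; each statement's English description precedes it below -/
import Mathlib

section
/- For the one-sided full shift σ on Σ₂ = {0,1}^ℕ, the preimage entropy dimension D_pre(σ) = 1. More precisely, D_pre(s,σ) = +∞ for s < 1, D_pre(1,σ) = log 2, and D_pre(s,σ) = 0 for s > 1. -/
open Filter Set
open scoped ENNReal

variable {X : Type*}

/-- The Bowen metric `d_{T,n}(x,y) = max_{0 ≤ j < n} d(T^j x, T^j y)`. -/
noncomputable def bowenDist [PseudoMetricSpace X] (T : X → X) (n : ℕ) (x y : X) : ℝ :=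
  ⨆ j : Fin n, dist (T^[(j : ℕ)] x) (T^[(j : ℕ)] y)

/-- `E` is an `(n,ε,K,T)`-separated set. -/
def IsPreSeparated [PseudoMetricSpace X] (T : X → X) (n : ℕ) (ε : ℝ) (K : Set X)
    (E : Set X) : Prop :=
  E ⊆ K ∧ ∀ x ∈ E, ∀ y ∈ E, x ≠ y → ε < bowenDist T n x y

/-- `E` is an `(n,ε,K,T)`-spanning set. -/
def IsPreSpanning [PseudoMetricSpace X] (T : X → X) (n : ℕ) (ε : ℝ) (K : Set X)
    (E : Set X) : Prop :=
  E ⊆ K ∧ ∀ x ∈ K, ∃ y ∈ E, bowenDist T n x y ≤ ε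

/-- `r(n,ε,K,T)`: maximal cardinality of an `(n,ε,K,T)`-separated set. -/
noncomputable def sepMax [PseudoMetricSpace X] (T : X → X) (n : ℕ) (ε : ℝ) (K : Set X) : ℝ≥0∞ :=
  ⨆ (E : Finset X) (_ : IsPreSeparated T n ε K ↑E), (E.card : ℝ≥0∞)

/-- `s(n,ε,K,T)`: minimal cardinality of an `(n,ε,K,T)`-spanning set. -/
noncomputable def spanMin [PseudoMetricSpace X] (T : X → X) (n : ℕ) (ε : ℝ) (K : Set X) : ℝ≥0∞ :=
  ⨅ (E : Finset X) (_ : IsPreSpanning T n ε K ↑E), (E.card : ℝ≥0∞)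

/-- The `s`-preimage entropy
`D_pre(s,T) = lim_{ε→0} limsup_n (1/n^s) log sup_{x ∈ X, k ≥ n} r(n,ε,T^{-k}(x),T)`,
where the (monotone) limit as `ε → 0` is expressed as a supremum over `ε > 0`. -/
noncomputable def preEnt [PseudoMetricSpace X] (T : X → X) (s : ℝ) : EReal :=
  ⨆ (ε : ℝ) (_ : 0 < ε), Filter.atTop.limsup fun n : ℕ =>
    (((((n : ℝ) ^ s)⁻¹ : ℝ) : EReal)) *
      ENNReal.log (⨆ (x : X) (k : ℕ) (_ : n ≤ k), sepMax T n ε (T^[k] ⁻¹' {x}))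

/-- The preimage entropy `h_pre(T)`. -/
noncomputable def preimageEntropy [PseudoMetricSpace X] (T : X → X) : EReal := preEnt T 1

/-- The preimage entropy dimension `D_pre(T) = inf {s > 0 : D_pre(s,T) = 0}`. -/
noncomputable def preDim [PseudoMetricSpace X] (T : X → X) : ℝ≥0∞ :=
  ⨅ (s : ℝ) (_ : 0 < s ∧ preEnt T s = 0), ENNReal.ofReal s


/-- The one-sided full 2-shift space `Σ₂ = {0,1}^ℕ`. -/
abbrev Sigma2 : Type := ℕ → Fin 2

private lemma sigma2_summable (x y : Sigma2) :
    Summable fun n : ℕ => ((if x n = y n then 0 else 1) / 2 ^ n : ℝ) := by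
  refine Summable.of_nonneg_of_le (fun n => by positivity) (fun n => ?_) summable_geometric_two
  calc ((if x n = y n then 0 else 1) / 2 ^ n : ℝ) ≤ 1 / 2 ^ n := by
        gcongr
        · split <;> norm_num
    _ = (1 / 2) ^ n := by rw [div_pow, one_pow]

/-- The metric `ρ(x,y) = Σ_n d(x_n,y_n)/2^n`. -/
noncomputable instance Sigma2.metricSpace : MetricSpace Sigma2 where
  dist x y := ∑' n : ℕ, (if x n = y n then 0 else 1) / 2 ^ n
  dist_self x := by simp
  dist_comm x y := by
    show (∑' n : ℕ, (if x n = y n then 0 else 1) / 2 ^ n) =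
        ∑' n : ℕ, (if y n = x n then 0 else 1) / 2 ^ n
    refine tsum_congr fun n => ?_
    by_cases h : x n = y n
    · rw [if_pos h, if_pos h.symm]
    · rw [if_neg h, if_neg fun h' => h h'.symm]
  dist_triangle x y z := by
    show (∑' n : ℕ, ((if x n = z n then 0 else 1) / 2 ^ n : ℝ)) ≤
        (∑' n : ℕ, ((if x n = y n then 0 else 1) / 2 ^ n : ℝ)) +
        ∑' n : ℕ, ((if y n = z n then 0 else 1) / 2 ^ n : ℝ)
    rw [← Summable.tsum_add (sigma2_summable x y) (sigma2_summable y z)]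
    refine Summable.tsum_le_tsum (fun n => ?_) (sigma2_summable x z)
      ((sigma2_summable x y).add (sigma2_summable y z))
    by_cases h : x n = z n
    · rw [if_pos h, zero_div]
      positivity
    · rw [if_neg h]
      by_cases h1 : x n = y n
      · rw [if_pos h1, if_neg fun h2 => h (h1.trans h2)]
        simp
      · rw [if_neg h1]
        have h2 : (0 : ℝ) ≤ (if y n = z n then 0 else 1) / 2 ^ n := by positivity
        linarith
  eq_of_dist_eq_zero := by
    intro x y h
    funext n
    by_contra hne
    have hle : ((if x n = y n then 0 else 1) / 2 ^ n : ℝ) ≤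
        ∑' m : ℕ, ((if x m = y m then 0 else 1) / 2 ^ m : ℝ) :=
      Summable.le_tsum (sigma2_summable x y) n fun m _ => by positivity
    rw [if_neg hne] at hle
    have h0 : (∑' m : ℕ, ((if x m = y m then 0 else 1) / 2 ^ m : ℝ)) = 0 := h
    rw [h0] at hle
    have hpos : (0 : ℝ) < 1 / 2 ^ n := by positivity
    exact absurd hle (not_le.mpr hpos)

/-- The one-sided shift map. -/
def shiftMap : Sigma2 → Sigma2 := fun x n => x (n + 1)

lemma shiftMap_iterate (k : ℕ) (y : Sigma2) (m : ℕ) : (shiftMap^[k] y) m = y (m + k) := by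
  induction k generalizing y m with
  | zero => rfl
  | succ k ih =>
      rw [Function.iterate_succ_apply, ih]
      show y (m + k + 1) = y (m + (k+1)); ring_nf

lemma dist_sigma2 (x y : Sigma2) :
    dist x y = ∑' n : ℕ, ((if x n = y n then 0 else 1) / 2 ^ n : ℝ) := rfl

lemma one_le_dist_sigma2 {y z : Sigma2} (h : y 0 ≠ z 0) : 1 ≤ dist y z := by
  rw [dist_sigma2]
  have := Summable.le_tsum (sigma2_summable y z) 0 (fun m _ => by positivity)
  rw [if_neg h] at this
  simpa using this

lemma dist_sigma2_le {y z : Sigma2} {M : ℕ} (h : ∀ i < M, y i = z i) :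
    dist y z ≤ 2 * (1/2) ^ M := by
  rw [dist_sigma2]
  have hs : Summable fun i : ℕ => ((1:ℝ)/2) ^ (i + M) :=
    (summable_geometric_two.comp_injective (add_left_injective M))
  have hle : ∀ i : ℕ, ((if y i = z i then 0 else 1) / 2 ^ i : ℝ) ≤
      (if i < M then 0 else (1/2) ^ i) := by
    intro i
    by_cases hi : i < M
    · simp [h i hi, hi]
    · rw [if_neg hi]
      split
      · rw [zero_div]; positivity
      · rw [div_pow, one_pow]
  calc (∑' i : ℕ, ((if y i = z i then 0 else 1) / 2 ^ i : ℝ))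
      ≤ ∑' i : ℕ, (if i < M then 0 else ((1:ℝ)/2) ^ i) := by
        refine Summable.tsum_le_tsum hle (sigma2_summable y z) ?_
        refine Summable.of_nonneg_of_le (fun i => by positivity) (fun i => ?_) summable_geometric_two
        split
        · positivity
        · rfl
    _ = ∑' i : ℕ, ((1:ℝ)/2) ^ (i + M) := by
        have hsum : Summable fun i : ℕ => (if i < M then 0 else ((1:ℝ)/2) ^ i) := by
          refine Summable.of_nonneg_of_le (fun i => by positivity) (fun i => ?_)
            summable_geometric_two
          split
          · positivity
          · rfl
        rw [← Summable.sum_add_tsum_nat_add M hsum]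
        have h1 : (∑ i ∈ Finset.range M, if i < M then 0 else ((1:ℝ)/2) ^ i) = 0 :=
          Finset.sum_eq_zero fun i hi => if_pos (Finset.mem_range.mp hi)
        have h2 : (∑' i : ℕ, if i + M < M then 0 else ((1:ℝ)/2) ^ (i + M)) =
            ∑' i : ℕ, ((1:ℝ)/2) ^ (i + M) :=
          tsum_congr fun i => if_neg (by omega)
        rw [h1, h2, zero_add]
    _ ≤ 2 * (1/2) ^ M := by
        have : (∑' i : ℕ, ((1:ℝ)/2) ^ (i + M)) = (1/2) ^ M * 2 := by
          simp_rw [pow_add, mul_comm]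
          rw [tsum_mul_left, tsum_geometric_two]
          ring_nf
        rw [this]; ring_nf; rfl

lemma bowenDist_le_of_agree {y z : Sigma2} {n M : ℕ} (h : ∀ i < n + M, y i = z i) :
    bowenDist shiftMap n y z ≤ (1/2) ^ M := by
  unfold bowenDist
  rcases Nat.eq_zero_or_pos n with hn | hn
  · subst hn
    rw [show (⨆ j : Fin 0, dist (shiftMap^[(j:ℕ)] y) (shiftMap^[(j:ℕ)] z)) = sSup ∅ by
      rw [iSup]; congr; exact Set.range_eq_empty _]
    rw [Real.sSup_empty]
    positivity
  · have : Nonempty (Fin n) := ⟨⟨0, hn⟩⟩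
    refine ciSup_le fun j => ?_
    have hagree : ∀ i < (n + M - (j:ℕ) - 1) + 1, (shiftMap^[(j:ℕ)] y) i = (shiftMap^[(j:ℕ)] z) i := by
      intro i hi
      rw [shiftMap_iterate, shiftMap_iterate]
      exact h _ (by omega)
    calc dist (shiftMap^[(j:ℕ)] y) (shiftMap^[(j:ℕ)] z)
        ≤ 2 * (1/2) ^ ((n + M - (j:ℕ) - 1) + 1) := dist_sigma2_le hagree
      _ ≤ 2 * ((1/2) * (1/2) ^ M) := by
          rw [pow_succ, mul_comm ((1:ℝ)/2)]
          have hj : (j:ℕ) < n := j.isLt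
          gcongr 2 * (?_ * _)
          exact pow_le_pow_of_le_one (by norm_num) (by norm_num) (by omega)
      _ = (1/2) ^ M := by ring

lemma one_le_bowenDist {y z : Sigma2} {n : ℕ} {i : ℕ} (hi : i < n) (h : y i ≠ z i) :
    1 ≤ bowenDist shiftMap n y z := by
  have hb : BddAbove (Set.range fun j : Fin n => dist (shiftMap^[(j:ℕ)] y) (shiftMap^[(j:ℕ)] z)) :=
    Set.Finite.bddAbove (Set.finite_range _)
  have := le_ciSup hb (⟨i, hi⟩ : Fin n)
  refine le_trans ?_ this
  refine one_le_dist_sigma2 ?_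
  simpa [shiftMap_iterate] using h

/-- The basic point construction: prescribe first `n` coordinates, zeros up to `k`, then `x`. -/
noncomputable def shiftPt (n k : ℕ) (x : Sigma2) (w : Fin n → Fin 2) : Sigma2 :=
  fun i => if h : i < n then w ⟨i, h⟩ else if i < k then 0 else x (i - k)

lemma shiftPt_mem {n k : ℕ} (hk : n ≤ k) (x : Sigma2) (w : Fin n → Fin 2) :
    shiftPt n k x w ∈ shiftMap^[k] ⁻¹' {x} := by
  simp only [Set.mem_preimage, Set.mem_singleton_iff]
  funext m
  rw [shiftMap_iterate]
  unfold shiftPt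
  rw [dif_neg (by omega), if_neg (by omega)]
  congr 1
  omega

lemma shiftPt_apply_of_lt {n k : ℕ} (x : Sigma2) (w : Fin n → Fin 2) {i : ℕ} (hi : i < n) :
    shiftPt n k x w i = w ⟨i, hi⟩ := dif_pos hi

lemma sepMax_lower {n k : ℕ} (hk : n ≤ k) (x : Sigma2) {ε : ℝ} (hε : ε < 1) :
    (2 ^ n : ℝ≥0∞) ≤ sepMax shiftMap n ε (shiftMap^[k] ⁻¹' {x}) := by
  classical
  have hinj : Function.Injective (shiftPt n k x) := by
    intro w w' h
    funext i
    have := congrFun h (i : ℕ)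
    rwa [shiftPt_apply_of_lt x w i.isLt, shiftPt_apply_of_lt x w' i.isLt] at this
  set E : Finset Sigma2 := Finset.univ.image (shiftPt n k x) with hE
  have hcard : (E.card : ℝ≥0∞) = 2 ^ n := by
    rw [hE, Finset.card_image_of_injective _ hinj, Finset.card_univ]
    simp [Fintype.card_fun]
  have hsep : IsPreSeparated shiftMap n ε (shiftMap^[k] ⁻¹' {x}) ↑E := by
    constructor
    · intro y hy
      simp only [hE, Finset.coe_image, Finset.coe_univ, Set.image_univ, Set.mem_range] at hy
      obtain ⟨w, rfl⟩ := hy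
      exact shiftPt_mem hk x w
    · intro y hy z hz hne
      simp only [hE, Finset.coe_image, Finset.coe_univ, Set.image_univ, Set.mem_range] at hy hz
      obtain ⟨w, rfl⟩ := hy
      obtain ⟨w', rfl⟩ := hz
      have hww : w ≠ w' := fun h => hne (by rw [h])
      obtain ⟨j, hj⟩ := Function.ne_iff.mp hww
      refine lt_of_lt_of_le hε (le_trans ?_ (one_le_bowenDist j.isLt ?_))
      · norm_num
      · rw [shiftPt_apply_of_lt x w j.isLt, shiftPt_apply_of_lt x w' j.isLt]
        exact hj
  calc (2 ^ n : ℝ≥0∞) = (E.card : ℝ≥0∞) := hcard.symm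
    _ ≤ sepMax shiftMap n ε (shiftMap^[k] ⁻¹' {x}) := le_iSup₂ (f := fun (E : Finset Sigma2)
        (_ : IsPreSeparated shiftMap n ε (shiftMap^[k] ⁻¹' {x}) ↑E) => (E.card : ℝ≥0∞)) E hsep

lemma one_le_sepMax {n k : ℕ} (hk : n ≤ k) (x : Sigma2) (ε : ℝ) :
    1 ≤ sepMax shiftMap n ε (shiftMap^[k] ⁻¹' {x}) := by
  classical
  set y : Sigma2 := shiftPt n k x (fun _ => 0) with hy
  have hsep : IsPreSeparated shiftMap n ε (shiftMap^[k] ⁻¹' {x}) ↑({y} : Finset Sigma2) := by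
    constructor
    · intro z hz
      simp only [Finset.coe_singleton, Set.mem_singleton_iff] at hz
      subst hz
      exact shiftPt_mem hk x _
    · intro a ha b hb hne
      simp only [Finset.coe_singleton, Set.mem_singleton_iff] at ha hb
      exact absurd (ha.trans hb.symm) hne
  calc (1 : ℝ≥0∞) = ((({y} : Finset Sigma2).card : ℝ≥0∞)) := by simp
    _ ≤ _ := le_iSup₂ (f := fun (E : Finset Sigma2)
        (_ : IsPreSeparated shiftMap n ε (shiftMap^[k] ⁻¹' {x}) ↑E) => (E.card : ℝ≥0∞)) _ hsep

lemma sepMax_upper {n M : ℕ} {ε : ℝ} (hε : (1/2 : ℝ) ^ M ≤ ε) (K : Set Sigma2) :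
    sepMax shiftMap n ε K ≤ 2 ^ (n + M) := by
  classical
  refine iSup₂_le fun E hE => ?_
  have hG : ∀ y ∈ E, ∀ z ∈ E,
      (fun (j : Fin (n+M)) => y (j : ℕ)) = (fun (j : Fin (n+M)) => z (j : ℕ)) → y = z := by
    intro y hy z hz hyz
    by_contra hne
    have hsep := hE.2 y hy z hz hne
    have hagree : ∀ i < n + M, y i = z i := fun i hi => congrFun hyz ⟨i, hi⟩
    exact absurd hsep (not_lt.mpr (le_trans (bowenDist_le_of_agree hagree) hε))
  have := Finset.card_le_card_of_injOn (f := fun (y : Sigma2) (j : Fin (n+M)) => y (j : ℕ))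
    (fun y _ => Finset.mem_univ _) (fun y hy z hz h => hG y hy z hz h) (t := Finset.univ)
  calc (E.card : ℝ≥0∞) ≤ ((Finset.univ : Finset (Fin (n+M) → Fin 2)).card : ℝ≥0∞) := by
        exact_mod_cast this
    _ = 2 ^ (n + M) := by simp [Finset.card_univ, Fintype.card_fun]

/-- `sup_{x, k ≥ n} r(n,ε,σ^{-k}(x),σ)`. -/
noncomputable def Sfun (ε : ℝ) (n : ℕ) : ℝ≥0∞ :=
  ⨆ (x : Sigma2) (k : ℕ) (_ : n ≤ k), sepMax shiftMap n ε (shiftMap^[k] ⁻¹' {x})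

lemma Sfun_le {ε : ℝ} {M : ℕ} (hε : (1/2 : ℝ) ^ M ≤ ε) (n : ℕ) :
    Sfun ε n ≤ 2 ^ (n + M) :=
  iSup_le fun _ => iSup_le fun _ => iSup_le fun _ => sepMax_upper hε _

lemma one_le_Sfun (ε : ℝ) (n : ℕ) : 1 ≤ Sfun ε n := by
  refine le_trans (one_le_sepMax (le_refl n) (fun _ => 0) ε) ?_
  exact le_iSup_of_le (fun _ => 0) (le_iSup_of_le n (le_iSup_of_le (le_refl n) (le_refl _)))

lemma pow_le_Sfun {ε : ℝ} (hε : ε < 1) (n : ℕ) : (2 ^ n : ℝ≥0∞) ≤ Sfun ε n := by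
  refine le_trans (sepMax_lower (le_refl n) (fun _ => 0) hε) ?_
  exact le_iSup_of_le (fun _ => 0) (le_iSup_of_le n (le_iSup_of_le (le_refl n) (le_refl _)))

lemma log_two_pow_ennreal (j : ℕ) :
    ENNReal.log ((2 : ℝ≥0∞) ^ j) = (((j : ℝ) * Real.log 2 : ℝ) : EReal) := by
  rw [ENNReal.log_pow]
  have h2 : ENNReal.log 2 = ((Real.log 2 : ℝ) : EReal) := by
    rw [ENNReal.log_pos_real (by norm_num) (by norm_num)]
    norm_num
  rw [h2]
  rw [← EReal.coe_coe_eq_natCast, ← EReal.coe_mul]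

/-- Real value of `log (Sfun ε n)`. -/
noncomputable def Lr (ε : ℝ) (n : ℕ) : ℝ := (ENNReal.log (Sfun ε n)).toReal

lemma log_Sfun_eq {ε : ℝ} {M : ℕ} (hε : (1/2 : ℝ) ^ M ≤ ε) (n : ℕ) :
    ENNReal.log (Sfun ε n) = ((Lr ε n : ℝ) : EReal) := by
  refine (EReal.coe_toReal ?_ ?_).symm
  · exact ne_top_of_lt (ENNReal.log_lt_top_iff.mpr
      (lt_of_le_of_lt (Sfun_le hε n) (by exact ENNReal.pow_lt_top (by norm_num))))
  · rw [ne_eq, ENNReal.log_eq_bot_iff]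
    exact fun h => by simpa [h] using one_le_Sfun ε n

open scoped Topology

lemma Lr_nonneg {ε : ℝ} {M : ℕ} (hε : (1/2 : ℝ) ^ M ≤ ε) (n : ℕ) : 0 ≤ Lr ε n := by
  have h := ENNReal.zero_le_log_iff.mpr (one_le_Sfun ε n)
  rw [log_Sfun_eq hε n] at h
  exact_mod_cast h

lemma Lr_le {ε : ℝ} {M : ℕ} (hε : (1/2 : ℝ) ^ M ≤ ε) (n : ℕ) :
    Lr ε n ≤ ((n : ℝ) + M) * Real.log 2 := by
  have h := ENNReal.log_monotone (Sfun_le hε n)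
  rw [log_Sfun_eq hε n, log_two_pow_ennreal] at h
  rw [EReal.coe_le_coe_iff] at h
  calc Lr ε n ≤ ((n + M : ℕ) : ℝ) * Real.log 2 := h
    _ = ((n : ℝ) + M) * Real.log 2 := by push_cast; ring

lemma le_Lr {ε : ℝ} {M : ℕ} (hε : (1/2 : ℝ) ^ M ≤ ε) (hε1 : ε < 1) (n : ℕ) :
    (n : ℝ) * Real.log 2 ≤ Lr ε n := by
  have h := ENNReal.log_monotone (pow_le_Sfun hε1 n)
  rw [log_Sfun_eq hε n, log_two_pow_ennreal] at h
  exact EReal.coe_le_coe_iff.mp h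

lemma limsup_coe_le {b u : ℕ → ℝ} {c : ℝ} (h : ∀ᶠ n in atTop, b n ≤ u n)
    (hu : Tendsto u atTop (𝓝 c)) :
    Filter.atTop.limsup (fun n => ((b n : ℝ) : EReal)) ≤ (c : EReal) := by
  have hu' : Tendsto (fun n => ((u n : ℝ) : EReal)) atTop (𝓝 (c : EReal)) :=
    EReal.tendsto_coe.mpr hu
  rw [← hu'.limsup_eq]
  exact limsup_le_limsup (h.mono fun n hn => EReal.coe_le_coe_iff.mpr hn)

lemma le_liminf_coe {b l : ℕ → ℝ} {c : ℝ} (h : ∀ᶠ n in atTop, l n ≤ b n)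
    (hl : Tendsto l atTop (𝓝 c)) :
    (c : EReal) ≤ Filter.atTop.liminf (fun n => ((b n : ℝ) : EReal)) := by
  have hl' : Tendsto (fun n => ((l n : ℝ) : EReal)) atTop (𝓝 (c : EReal)) :=
    EReal.tendsto_coe.mpr hl
  rw [← hl'.liminf_eq]
  exact liminf_le_liminf (h.mono fun n hn => EReal.coe_le_coe_iff.mpr hn)

lemma liminf_coe_top {b l : ℕ → ℝ} (h : ∀ᶠ n in atTop, l n ≤ b n)
    (hl : Tendsto l atTop atTop) :
    Filter.atTop.liminf (fun n => ((b n : ℝ) : EReal)) = ⊤ := by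
  have hl' : Tendsto (fun n => ((l n : ℝ) : EReal)) atTop (𝓝 (⊤ : EReal)) := by
    rw [EReal.tendsto_nhds_top_iff_real]
    intro x
    filter_upwards [hl.eventually_gt_atTop x] with n hn
    exact_mod_cast hn
  rw [eq_top_iff, ← hl'.liminf_eq]
  exact liminf_le_liminf (h.mono fun n hn => EReal.coe_le_coe_iff.mpr hn)

lemma tendsto_u_one (M : ℕ) :
    Tendsto (fun n : ℕ => (((n:ℝ) ^ (1:ℝ))⁻¹ * (((n:ℝ) + M) * Real.log 2))) atTop
      (𝓝 (Real.log 2)) := by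
  have h1 : Tendsto (fun n : ℕ => (1 + (M:ℝ) * ((n:ℝ))⁻¹) * Real.log 2) atTop
      (𝓝 ((1 + (M:ℝ) * 0) * Real.log 2)) :=
    ((tendsto_const_nhds.add (tendsto_const_nhds.mul
      tendsto_inv_atTop_nhds_zero_nat)).mul tendsto_const_nhds)
  rw [show (1 + (M:ℝ) * 0) * Real.log 2 = Real.log 2 by ring] at h1
  refine h1.congr' ?_
  filter_upwards [eventually_ge_atTop 1] with n hn
  have hn' : (0:ℝ) < (n:ℝ) := by exact_mod_cast hn
  rw [Real.rpow_one]
  field_simp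

lemma tendsto_u_gt {s : ℝ} (hs : 1 < s) (M : ℕ) :
    Tendsto (fun n : ℕ => (((n:ℝ) ^ s)⁻¹ * (((n:ℝ) + M) * Real.log 2))) atTop (𝓝 0) := by
  have ha : Tendsto (fun n : ℕ => ((n:ℝ) ^ (1 - s))) atTop (𝓝 0) := by
    have := tendsto_rpow_neg_atTop (y := s - 1) (by linarith)
    rw [show -(s-1) = 1 - s by ring] at this
    exact this.comp tendsto_natCast_atTop_atTop
  have hb : Tendsto (fun n : ℕ => ((n:ℝ) ^ (-s))) atTop (𝓝 0) := by
    exact (tendsto_rpow_neg_atTop (by linarith)).comp tendsto_natCast_atTop_atTop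
  have h1 : Tendsto (fun n : ℕ => ((n:ℝ) ^ (1-s) + (M:ℝ) * ((n:ℝ) ^ (-s))) * Real.log 2)
      atTop (𝓝 ((0 + (M:ℝ) * 0) * Real.log 2)) :=
    ((ha.add (tendsto_const_nhds.mul hb)).mul tendsto_const_nhds)
  rw [show ((0:ℝ) + (M:ℝ) * 0) * Real.log 2 = 0 by ring] at h1
  refine h1.congr' ?_
  filter_upwards [eventually_ge_atTop 1] with n hn
  have hn' : (0:ℝ) < (n:ℝ) := by exact_mod_cast hn
  have e1 : (n:ℝ) ^ (1-s) = (n:ℝ) * ((n:ℝ) ^ s)⁻¹ := by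
    rw [Real.rpow_sub hn', Real.rpow_one, div_eq_mul_inv]
  have e2 : (n:ℝ) ^ (-s) = ((n:ℝ) ^ s)⁻¹ := Real.rpow_neg hn'.le s
  rw [e1, e2]
  ring

lemma tendsto_l_lt {s : ℝ} (hs : s < 1) :
    Tendsto (fun n : ℕ => (((n:ℝ) ^ s)⁻¹ * ((n:ℝ) * Real.log 2))) atTop atTop := by
  have ha : Tendsto (fun n : ℕ => ((n:ℝ) ^ (1 - s) * Real.log 2)) atTop atTop :=
    (((tendsto_rpow_atTop (by linarith)).comp
      tendsto_natCast_atTop_atTop).atTop_mul_const (Real.log_pos one_lt_two))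
  refine ha.congr' ?_
  filter_upwards [eventually_ge_atTop 1] with n hn
  have hn' : (0:ℝ) < (n:ℝ) := by exact_mod_cast hn
  rw [Real.rpow_sub hn', Real.rpow_one, div_eq_mul_inv]
  ring

lemma term_eq {ε : ℝ} {M : ℕ} (hε : (1/2 : ℝ) ^ M ≤ ε) (s : ℝ) (n : ℕ) :
    ((((((n : ℝ) ^ s)⁻¹ : ℝ)) : EReal)) * ENNReal.log (Sfun ε n) =
      (((((n : ℝ) ^ s)⁻¹ * Lr ε n : ℝ)) : EReal) := by
  rw [log_Sfun_eq hε, ← EReal.coe_mul]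

lemma exists_M {ε : ℝ} (hε : 0 < ε) : ∃ M : ℕ, (1/2 : ℝ) ^ M ≤ ε := by
  obtain ⟨M, hM⟩ := exists_pow_lt_of_lt_one hε (by norm_num : (1/2 : ℝ) < 1)
  exact ⟨M, hM.le⟩

lemma limsup_term_le_one {ε : ℝ} (hε : 0 < ε) :
    atTop.limsup (fun n : ℕ => ((((((n:ℝ) ^ (1:ℝ))⁻¹ : ℝ)) : EReal)) *
      ENNReal.log (Sfun ε n)) ≤ ((Real.log 2 : ℝ) : EReal) := by
  obtain ⟨M, hM⟩ := exists_M hε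
  have hfun : (fun n : ℕ => ((((((n:ℝ) ^ (1:ℝ))⁻¹ : ℝ)) : EReal)) * ENNReal.log (Sfun ε n)) =
      fun n : ℕ => (((((n:ℝ) ^ (1:ℝ))⁻¹ * Lr ε n : ℝ)) : EReal) := funext (term_eq hM 1)
  rw [hfun]
  refine limsup_coe_le (Eventually.of_forall fun n => ?_) (tendsto_u_one M)
  exact mul_le_mul_of_nonneg_left (Lr_le hM n) (by positivity)

lemma limsup_term_ge_one {ε : ℝ} {M : ℕ} (hM : (1/2 : ℝ) ^ M ≤ ε) (hε1 : ε < 1) :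
    ((Real.log 2 : ℝ) : EReal) ≤ atTop.limsup
      (fun n : ℕ => ((((((n:ℝ) ^ (1:ℝ))⁻¹ : ℝ)) : EReal)) * ENNReal.log (Sfun ε n)) := by
  have hfun : (fun n : ℕ => ((((((n:ℝ) ^ (1:ℝ))⁻¹ : ℝ)) : EReal)) * ENNReal.log (Sfun ε n)) =
      fun n : ℕ => (((((n:ℝ) ^ (1:ℝ))⁻¹ * Lr ε n : ℝ)) : EReal) := funext (term_eq hM 1)
  rw [hfun]
  have htend : Tendsto (fun n : ℕ => (((n:ℝ) ^ (1:ℝ))⁻¹ * ((n:ℝ) * Real.log 2))) atTop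
      (𝓝 (Real.log 2)) := (tendsto_u_one 0).congr (fun n => by norm_num)
  refine le_trans (le_liminf_coe (Eventually.of_forall fun n => ?_) htend) liminf_le_limsup
  exact mul_le_mul_of_nonneg_left (le_Lr hM hε1 n) (by positivity)

lemma limsup_term_top {s : ℝ} (hs : s < 1) {ε : ℝ} {M : ℕ} (hM : (1/2 : ℝ) ^ M ≤ ε)
    (hε1 : ε < 1) :
    atTop.limsup (fun n : ℕ => ((((((n:ℝ) ^ s)⁻¹ : ℝ)) : EReal)) *
      ENNReal.log (Sfun ε n)) = ⊤ := by
  have hfun : (fun n : ℕ => ((((((n:ℝ) ^ s)⁻¹ : ℝ)) : EReal)) * ENNReal.log (Sfun ε n)) =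
      fun n : ℕ => (((((n:ℝ) ^ s)⁻¹ * Lr ε n : ℝ)) : EReal) := funext (term_eq hM s)
  rw [hfun, eq_top_iff]
  have hliminf := liminf_coe_top (b := fun n : ℕ => ((n:ℝ) ^ s)⁻¹ * Lr ε n)
    (Eventually.of_forall fun n => mul_le_mul_of_nonneg_left (le_Lr hM hε1 n) (by positivity))
    (tendsto_l_lt hs)
  rw [← hliminf]
  exact liminf_le_limsup

lemma limsup_term_zero {s : ℝ} (hs : 1 < s) {ε : ℝ} (hε : 0 < ε) :
    atTop.limsup (fun n : ℕ => ((((((n:ℝ) ^ s)⁻¹ : ℝ)) : EReal)) *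
      ENNReal.log (Sfun ε n)) = 0 := by
  obtain ⟨M, hM⟩ := exists_M hε
  have hfun : (fun n : ℕ => ((((((n:ℝ) ^ s)⁻¹ : ℝ)) : EReal)) * ENNReal.log (Sfun ε n)) =
      fun n : ℕ => (((((n:ℝ) ^ s)⁻¹ * Lr ε n : ℝ)) : EReal) := funext (term_eq hM s)
  rw [hfun]
  refine le_antisymm ?_ ?_
  · have := limsup_coe_le (b := fun n : ℕ => ((n:ℝ) ^ s)⁻¹ * Lr ε n)
      (Eventually.of_forall fun n => mul_le_mul_of_nonneg_left (Lr_le hM n) (by positivity))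
      (tendsto_u_gt hs M)
    simpa using this
  · have := le_liminf_coe (b := fun n : ℕ => ((n:ℝ) ^ s)⁻¹ * Lr ε n) (c := 0)
      (Eventually.of_forall fun n => mul_nonneg (by positivity) (Lr_nonneg hM n))
      tendsto_const_nhds
    simpa using le_trans this liminf_le_limsup

theorem preDim_shift :
    (∀ s : ℝ, 0 < s → s < 1 → preEnt shiftMap s = ⊤) ∧
    preEnt shiftMap 1 = ((Real.log 2 : ℝ) : EReal) ∧
    (∀ s : ℝ, 1 < s → preEnt shiftMap s = 0) ∧
    preDim shiftMap = 1 := by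
  have hrep : ∀ s : ℝ, preEnt shiftMap s = ⨆ (ε : ℝ) (_ : 0 < ε),
      Filter.atTop.limsup (fun n : ℕ => ((((((n:ℝ) ^ s)⁻¹ : ℝ)) : EReal)) *
        ENNReal.log (Sfun ε n)) := fun s => rfl
  have part1 : ∀ s : ℝ, 0 < s → s < 1 → preEnt shiftMap s = ⊤ := by
    intro s hs0 hs1
    rw [hrep, eq_top_iff]
    refine le_trans ?_ (le_iSup₂ (f := fun (ε : ℝ) (_ : 0 < ε) =>
      Filter.atTop.limsup (fun n : ℕ => ((((((n:ℝ) ^ s)⁻¹ : ℝ)) : EReal)) *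
        ENNReal.log (Sfun ε n))) (1/2 : ℝ) (by norm_num))
    rw [limsup_term_top hs1 (M := 1) (by norm_num) (by norm_num)]
  have part2 : preEnt shiftMap 1 = ((Real.log 2 : ℝ) : EReal) := by
    rw [hrep]
    refine le_antisymm (iSup₂_le fun ε hε => limsup_term_le_one hε) ?_
    refine le_trans (limsup_term_ge_one (M := 1) (by norm_num) (by norm_num))
      (le_iSup₂ (f := fun (ε : ℝ) (_ : 0 < ε) =>
        Filter.atTop.limsup (fun n : ℕ => ((((((n:ℝ) ^ (1:ℝ))⁻¹ : ℝ)) : EReal)) *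
          ENNReal.log (Sfun ε n))) (1/2 : ℝ) (by norm_num))
  have part3 : ∀ s : ℝ, 1 < s → preEnt shiftMap s = 0 := by
    intro s hs
    rw [hrep]
    refine le_antisymm (iSup₂_le fun ε hε => (limsup_term_zero hs hε).le) ?_
    refine le_trans (limsup_term_zero hs (ε := 1) one_pos).ge
      (le_iSup₂ (f := fun (ε : ℝ) (_ : 0 < ε) =>
        Filter.atTop.limsup (fun n : ℕ => ((((((n:ℝ) ^ s)⁻¹ : ℝ)) : EReal)) *
          ENNReal.log (Sfun ε n))) (1 : ℝ) one_pos)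
  refine ⟨part1, part2, part3, ?_⟩
  refine le_antisymm ?_ ?_
  · refine ENNReal.le_of_forall_pos_le_add fun δ hδ _ => ?_
    have hmem : 0 < (1 : ℝ) + δ ∧ preEnt shiftMap ((1 : ℝ) + δ) = 0 :=
      ⟨by positivity, part3 _ (by exact_mod_cast lt_add_of_pos_right 1 hδ)⟩
    refine le_trans (iInf₂_le (f := fun (s : ℝ) (_ : 0 < s ∧ preEnt shiftMap s = 0) =>
      ENNReal.ofReal s) ((1 : ℝ) + δ) hmem) ?_
    rw [ENNReal.ofReal_add (by norm_num) δ.coe_nonneg, ENNReal.ofReal_one,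
      ENNReal.ofReal_coe_nnreal]
  · refine le_iInf₂ fun s hs => ?_
    rcases lt_trichotomy s 1 with h | h | h
    · exact absurd hs.2 (by rw [part1 s hs.1 h]; simp)
    · subst h
      exfalso
      rw [part2] at hs
      have := hs.2
      rw [EReal.coe_eq_zero] at this
      exact absurd this (ne_of_gt (Real.log_pos one_lt_two))
    · exact le_trans (by simp) (ENNReal.ofReal_le_ofReal h.le)
end

section
/- For every s > 0 and every m ∈ ℕ, the s-preimage entropy satisfies D_pre(s,T^m) ≤ m^s · D_pre(s,T). -/
open Filter Set
open scoped ENNReal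

variable {X : Type*}

lemma bowenDist_nonneg {X : Type*} [PseudoMetricSpace X] (T : X → X) (n : ℕ) (x y : X) :
    0 ≤ bowenDist T n x y := by
  rcases Nat.eq_zero_or_pos n with rfl | hn
  · simp [bowenDist, iSup, Set.range_eq_empty, Real.sSup_empty]
  · exact le_trans dist_nonneg
      (le_ciSup (f := fun j : Fin n => dist (T^[(j : ℕ)] x) (T^[(j : ℕ)] y))
        (Set.Finite.bddAbove (Set.finite_range _)) ⟨0, hn⟩)

lemma bowenDist_iter_le {X : Type*} [PseudoMetricSpace X] (T : X → X) (m n : ℕ) (hm : 0 < m)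
    (x y : X) : bowenDist (T^[m]) n x y ≤ bowenDist T (m * n) x y := by
  apply Real.iSup_le _ (bowenDist_nonneg T (m*n) x y)
  intro j
  have h : (T^[m])^[(j : ℕ)] = T^[m * (j : ℕ)] := (Function.iterate_mul T m j).symm
  rw [h]
  exact le_ciSup (f := fun j : Fin (m * n) => dist (T^[(j : ℕ)] x) (T^[(j : ℕ)] y))
    (Set.Finite.bddAbove (Set.finite_range _))
    ⟨m * (j : ℕ), mul_lt_mul_of_pos_left j.isLt hm⟩

noncomputable def mulOrderIso (r : ℝ) (hr : 0 < r) : EReal ≃o EReal where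
  toFun x := (r : EReal) * x
  invFun x := ((r⁻¹ : ℝ) : EReal) * x
  left_inv x := by
    show ((r⁻¹ : ℝ) : EReal) * ((r : EReal) * x) = x
    rw [← mul_assoc, ← EReal.coe_mul, inv_mul_cancel₀ hr.ne', EReal.coe_one, one_mul]
  right_inv x := by
    show (r : EReal) * (((r⁻¹ : ℝ) : EReal) * x) = x
    rw [← mul_assoc, ← EReal.coe_mul, mul_inv_cancel₀ hr.ne', EReal.coe_one, one_mul]
  map_rel_iff' {a b} := by
    show (r : EReal) * a ≤ (r : EReal) * b ↔ a ≤ b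
    constructor
    · intro h
      have h2 := mul_le_mul_of_nonneg_left h
        (EReal.coe_nonneg.mpr (inv_nonneg.mpr hr.le) : (0:EReal) ≤ ((r⁻¹ : ℝ) : EReal))
      rwa [← mul_assoc, ← mul_assoc, ← EReal.coe_mul, inv_mul_cancel₀ hr.ne', EReal.coe_one,
        one_mul, one_mul] at h2
    · intro h
      exact mul_le_mul_of_nonneg_left h (EReal.coe_nonneg.mpr hr.le)

lemma sepMax_iter_le {X : Type*} [PseudoMetricSpace X] (T : X → X) (m n : ℕ) (hm : 0 < m)
    (ε : ℝ) (K : Set X) : sepMax (T^[m]) n ε K ≤ sepMax T (m * n) ε K := by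
  refine iSup₂_le fun E hE => le_iSup₂_of_le E ?_ le_rfl
  exact ⟨hE.1, fun x hx y hy hxy =>
    lt_of_lt_of_le (hE.2 x hx y hy hxy) (bowenDist_iter_le T m n hm x y)⟩

theorem preEnt_iterate_le {X : Type*} [MetricSpace X] [CompactSpace X]
    {T : X → X} (hT : Continuous T) (s : ℝ) (hs : 0 < s) (m : ℕ) (hm : 0 < m) :
    preEnt (T^[m]) s ≤ ((((m : ℝ) ^ s : ℝ)) : EReal) * preEnt T s := by
  set C : ℝ := (m : ℝ) ^ s with hCdef
  have hC : 0 < C := Real.rpow_pos_of_pos (Nat.cast_pos.mpr hm) s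
  refine iSup₂_le fun ε hε => ?_
  set B : ℕ → EReal := fun N => (((((N : ℝ) ^ s)⁻¹ : ℝ) : EReal)) *
      ENNReal.log (⨆ (x : X) (k : ℕ) (_ : N ≤ k), sepMax T N ε (T^[k] ⁻¹' {x})) with hBdef
  have hB : Filter.atTop.limsup B ≤ preEnt T s := by
    refine le_trans ?_ (le_iSup_of_le ε (le_iSup_of_le hε le_rfl))
    exact le_rfl
  have key : ∀ n : ℕ,
      ((((((n : ℝ) ^ s)⁻¹ : ℝ)) : EReal)) *
        ENNReal.log (⨆ (x : X) (k : ℕ) (_ : n ≤ k),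
          sepMax (T^[m]) n ε ((T^[m])^[k] ⁻¹' {x})) ≤ (C : EReal) * B (m * n) := by
    intro n
    have hS : (⨆ (x : X) (k : ℕ) (_ : n ≤ k), sepMax (T^[m]) n ε ((T^[m])^[k] ⁻¹' {x})) ≤
        ⨆ (x : X) (k : ℕ) (_ : m * n ≤ k), sepMax T (m * n) ε (T^[k] ⁻¹' {x}) := by
      refine iSup_le fun x => iSup_le fun k => iSup_le fun hk => ?_
      have h1 : (T^[m])^[k] = T^[m * k] := (Function.iterate_mul T m k).symm
      rw [h1]
      refine le_trans (sepMax_iter_le T m n hm ε _) ?_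
      exact le_iSup_of_le x (le_iSup_of_le (m * k)
        (le_iSup_of_le (Nat.mul_le_mul_left m hk) le_rfl))
    have hcoef : ((((n : ℝ) ^ s)⁻¹ : ℝ)) = C * ((((m * n : ℕ) : ℝ) ^ s)⁻¹ : ℝ) := by
      have h2 : (((m * n : ℕ) : ℝ)) ^ s = C * ((n : ℝ)) ^ s := by
        push_cast
        rw [Real.mul_rpow (by positivity) (by positivity)]
      rw [h2, mul_inv, ← mul_assoc, mul_inv_cancel₀ hC.ne', one_mul]
    have hnonneg : (0 : EReal) ≤ ((((n : ℝ) ^ s)⁻¹ : ℝ) : EReal) :=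
      EReal.coe_nonneg.mpr (inv_nonneg.mpr (Real.rpow_nonneg (Nat.cast_nonneg n) s))
    calc ((((((n : ℝ) ^ s)⁻¹ : ℝ)) : EReal)) *
          ENNReal.log (⨆ (x : X) (k : ℕ) (_ : n ≤ k),
            sepMax (T^[m]) n ε ((T^[m])^[k] ⁻¹' {x}))
        ≤ ((((((n : ℝ) ^ s)⁻¹ : ℝ)) : EReal)) *
          ENNReal.log (⨆ (x : X) (k : ℕ) (_ : m * n ≤ k), sepMax T (m * n) ε (T^[k] ⁻¹' {x})) :=
          mul_le_mul_of_nonneg_left (ENNReal.log_monotone hS) hnonneg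
      _ = (C : EReal) * B (m * n) := by
          rw [hBdef]
          simp only
          rw [hcoef, EReal.coe_mul, mul_assoc]
  calc Filter.atTop.limsup (fun n : ℕ =>
        ((((((n : ℝ) ^ s)⁻¹ : ℝ)) : EReal)) *
          ENNReal.log (⨆ (x : X) (k : ℕ) (_ : n ≤ k),
            sepMax (T^[m]) n ε ((T^[m])^[k] ⁻¹' {x})))
      ≤ Filter.atTop.limsup (fun n : ℕ => (C : EReal) * B (m * n)) :=
        Filter.limsup_le_limsup (Filter.Eventually.of_forall key)
    _ = Filter.limsup (fun N : ℕ => (C : EReal) * B N)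
        (Filter.map (fun n : ℕ => m * n) Filter.atTop) :=
        Filter.limsup_comp (fun N : ℕ => (C : EReal) * B N) (fun n : ℕ => m * n) Filter.atTop
    _ ≤ Filter.atTop.limsup (fun N : ℕ => (C : EReal) * B N) :=
        Filter.limsup_le_limsup_of_le
          (Filter.tendsto_atTop_mono (fun n => Nat.le_mul_of_pos_left n hm) Filter.tendsto_id)
    _ = (C : EReal) * Filter.atTop.limsup B :=
        ((mulOrderIso C hC).limsup_apply).symm
    _ ≤ (C : EReal) * preEnt T s :=
        mul_le_mul_of_nonneg_left hB (EReal.coe_nonneg.mpr hC.le)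
end

section
/- For every 0 < s ≤ 1 and every m ∈ ℕ, D_pre(s,T^m) ≤ m · D_pre(s,T). -/
open Filter Set
open scoped ENNReal

variable {X : Type*}

lemma bowenDist_iterate_le [PseudoMetricSpace X] (T : X → X) {m : ℕ} (hm : 0 < m) (n : ℕ)
    (x y : X) : bowenDist (T^[m]) n x y ≤ bowenDist T (m * n) x y := by
  rcases Nat.eq_zero_or_pos n with rfl | hn
  · simp [bowenDist, Real.iSup_of_isEmpty]
  · have : Nonempty (Fin n) := ⟨⟨0, hn⟩⟩
    refine ciSup_le fun j => ?_
    have hj : m * (j : ℕ) < m * n := (Nat.mul_lt_mul_left hm).2 j.2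
    have he : (T^[m])^[(j : ℕ)] = T^[m * (j : ℕ)] := (Function.iterate_mul T m j).symm
    rw [he]
    exact le_ciSup (f := fun i : Fin (m * n) => dist (T^[(i : ℕ)] x) (T^[(i : ℕ)] y))
      (Set.Finite.bddAbove (Set.finite_range _)) ⟨m * (j : ℕ), hj⟩

lemma sepMax_iterate_le [PseudoMetricSpace X] (T : X → X) {m : ℕ} (hm : 0 < m) (n : ℕ)
    (ε : ℝ) (K : Set X) : sepMax (T^[m]) n ε K ≤ sepMax T (m * n) ε K := by
  refine iSup₂_le fun E hE => ?_
  refine le_iSup₂ (f := fun (E : Finset X) (_ : IsPreSeparated T (m * n) ε K ↑E) =>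
    (E.card : ℝ≥0∞)) E ⟨hE.1, fun x hx y hy hxy => ?_⟩
  exact (hE.2 x hx y hy hxy).trans_le (bowenDist_iterate_le T hm n x y)

lemma supSep_iterate_le [PseudoMetricSpace X] (T : X → X) {m : ℕ} (hm : 0 < m) (n : ℕ)
    (ε : ℝ) :
    (⨆ (x : X) (k : ℕ) (_ : n ≤ k), sepMax (T^[m]) n ε ((T^[m])^[k] ⁻¹' {x})) ≤
      ⨆ (x : X) (k : ℕ) (_ : m * n ≤ k), sepMax T (m * n) ε (T^[k] ⁻¹' {x}) := by
  refine iSup_le fun x => iSup_le fun k => iSup_le fun hk => ?_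
  have h1 : sepMax (T^[m]) n ε ((T^[m])^[k] ⁻¹' {x}) ≤ sepMax T (m * n) ε (T^[m * k] ⁻¹' {x}) := by
    rw [Function.iterate_mul]
    exact sepMax_iterate_le T hm n ε _
  refine h1.trans ?_
  exact le_iSup_of_le x (le_iSup_of_le (m * k)
    (le_iSup_of_le (Nat.mul_le_mul_left m hk) le_rfl))

lemma one_le_supSep [PseudoMetricSpace X] [Nonempty X] (T : X → X) (N : ℕ) (ε : ℝ) :
    1 ≤ ⨆ (x : X) (k : ℕ) (_ : N ≤ k), sepMax T N ε (T^[k] ⁻¹' {x}) := by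
  obtain ⟨x₀⟩ := ‹Nonempty X›
  have hsep : IsPreSeparated T N ε (T^[N] ⁻¹' {T^[N] x₀}) ↑({x₀} : Finset X) := by
    constructor
    · intro z hz
      simp only [Finset.coe_singleton, Set.mem_singleton_iff] at hz
      subst hz
      simp
    · intro x hx y hy hxy
      simp only [Finset.coe_singleton, Set.mem_singleton_iff] at hx hy
      exact absurd (hx.trans hy.symm) hxy
  have h1 : (1 : ℝ≥0∞) ≤ sepMax T N ε (T^[N] ⁻¹' {T^[N] x₀}) := by
    have := le_iSup₂ (f := fun (E : Finset X)
      (_ : IsPreSeparated T N ε (T^[N] ⁻¹' {T^[N] x₀}) ↑E) => (E.card : ℝ≥0∞)) _ hsep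
    simpa [sepMax] using this
  refine h1.trans ?_
  exact le_iSup_of_le (T^[N] x₀) (le_iSup_of_le N (le_iSup_of_le le_rfl le_rfl))

lemma EReal.continuous_const_mul' {c : ℝ} (hc : c ≠ 0) :
    Continuous (fun x : EReal => (c : EReal) * x) := by
  rw [continuous_iff_continuousAt]
  intro x
  have h := EReal.continuousAt_mul (p := ((c : EReal), x))
    (Or.inl (by simp [hc])) (Or.inl (by simp [hc]))
    (Or.inl (by simp)) (Or.inl (by simp))
  exact h.comp ((continuous_const.prodMk continuous_id).continuousAt)

theorem preEnt_iterate_le_mul {X : Type*} [MetricSpace X] [CompactSpace X]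
    {T : X → X} (hT : Continuous T) (s : ℝ) (hs0 : 0 < s) (hs1 : s ≤ 1)
    (m : ℕ) (hm : 0 < m) :
    preEnt (T^[m]) s ≤ ((m : ℝ) : EReal) * preEnt T s := by
  rcases isEmpty_or_nonempty X with hX | hX
  · -- empty space: LHS is ⊥
    refine le_trans ?_ bot_le
    refine iSup₂_le fun ε hε => le_of_eq ?_
    have hev : ∀ᶠ n : ℕ in atTop, ((((n : ℝ) ^ s)⁻¹ : ℝ) : EReal) *
        ENNReal.log (⨆ (x : X) (k : ℕ) (_ : n ≤ k), sepMax (T^[m]) n ε ((T^[m])^[k] ⁻¹' {x}))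
        = (⊥ : EReal) := by
      filter_upwards [eventually_ge_atTop 1] with n hn
      have h0 : (⨆ (x : X) (k : ℕ) (_ : n ≤ k), sepMax (T^[m]) n ε ((T^[m])^[k] ⁻¹' {x}))
          = 0 := by simp
      rw [h0, ENNReal.log_zero]
      have hpos : (0 : ℝ) < ((n : ℝ) ^ s)⁻¹ := by positivity
      exact EReal.mul_bot_of_pos (by exact_mod_cast hpos)
    rw [limsup_congr hev, limsup_const]
  · -- main case
    set mE : EReal := ((m : ℝ) : EReal) with hmE
    have hm0E : (0 : EReal) ≤ mE := by
      rw [hmE]; exact_mod_cast (Nat.cast_nonneg m : (0:ℝ) ≤ m)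
    refine iSup₂_le fun ε hε => ?_
    set G : ℕ → ℝ≥0∞ := fun N => ⨆ (x : X) (k : ℕ) (_ : N ≤ k), sepMax T N ε (T^[k] ⁻¹' {x})
      with hG
    set w : ℕ → EReal := fun N => ((((N : ℝ) ^ s)⁻¹ : ℝ) : EReal) * ENNReal.log (G N) with hw
    -- pointwise bound
    have step1 : ∀ n : ℕ, ((((n : ℝ) ^ s)⁻¹ : ℝ) : EReal) *
        ENNReal.log (⨆ (x : X) (k : ℕ) (_ : n ≤ k), sepMax (T^[m]) n ε ((T^[m])^[k] ⁻¹' {x}))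
        ≤ mE * w (m * n) := by
      intro n
      rcases Nat.eq_zero_or_pos n with rfl | hn
      · have h1 : ((((0 : ℕ) : ℝ) ^ s)⁻¹ : ℝ) = 0 := by
          simp [Real.zero_rpow hs0.ne']
        have h2 : w (m * 0) = 0 := by
          simp [hw, Real.zero_rpow hs0.ne']
        rw [h1, h2]
        simp
      · have hnum : ((n : ℝ) ^ s)⁻¹ ≤ (m : ℝ) * (((m * n : ℕ) : ℝ) ^ s)⁻¹ := by
          have hm1 : (1 : ℝ) ≤ (m : ℝ) := by exact_mod_cast hm
          have hn1 : (1 : ℝ) ≤ (n : ℝ) := by exact_mod_cast hn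
          have hms : (m : ℝ) ^ s ≤ (m : ℝ) := by
            have := Real.rpow_le_rpow_of_exponent_le hm1 hs1
            rwa [Real.rpow_one] at this
          have hmsp : (0 : ℝ) < (m : ℝ) ^ s := Real.rpow_pos_of_pos (by linarith) s
          have hnsp : (0 : ℝ) < (n : ℝ) ^ s := Real.rpow_pos_of_pos (by linarith) s
          have hcast : (((m * n : ℕ) : ℝ) : ℝ) = (m : ℝ) * (n : ℝ) := by push_cast; ring
          rw [hcast, Real.mul_rpow (by linarith) (by linarith), mul_inv]
          rw [← mul_assoc]
          have h1 : (1 : ℝ) ≤ (m : ℝ) * ((m : ℝ) ^ s)⁻¹ := by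
            rw [← div_eq_mul_inv, le_div_iff₀ hmsp, one_mul]
            exact hms
          calc ((n : ℝ) ^ s)⁻¹ = 1 * ((n : ℝ) ^ s)⁻¹ := (one_mul _).symm
            _ ≤ ((m : ℝ) * ((m : ℝ) ^ s)⁻¹) * ((n : ℝ) ^ s)⁻¹ :=
              mul_le_mul_of_nonneg_right h1 (inv_nonneg.2 hnsp.le)
        have hlog1 : ENNReal.log (⨆ (x : X) (k : ℕ) (_ : n ≤ k),
            sepMax (T^[m]) n ε ((T^[m])^[k] ⁻¹' {x})) ≤ ENNReal.log (G (m * n)) :=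
          ENNReal.log_monotone (supSep_iterate_le T hm n ε)
        have hlog0 : (0 : EReal) ≤ ENNReal.log (G (m * n)) := by
          have := one_le_supSep T (m * n) ε
          have := ENNReal.log_monotone this
          rwa [ENNReal.log_one] at this
        have hc0 : (0 : EReal) ≤ ((((n : ℝ) ^ s)⁻¹ : ℝ) : EReal) := by
          have : (0 : ℝ) ≤ ((n : ℝ) ^ s)⁻¹ := by positivity
          exact_mod_cast this
        calc ((((n : ℝ) ^ s)⁻¹ : ℝ) : EReal) * ENNReal.log (⨆ (x : X) (k : ℕ) (_ : n ≤ k),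
              sepMax (T^[m]) n ε ((T^[m])^[k] ⁻¹' {x}))
            ≤ ((((n : ℝ) ^ s)⁻¹ : ℝ) : EReal) * ENNReal.log (G (m * n)) :=
              mul_le_mul_of_nonneg_left hlog1 hc0
          _ ≤ (((m : ℝ) * (((m * n : ℕ) : ℝ) ^ s)⁻¹ : ℝ) : EReal) * ENNReal.log (G (m * n)) := by
              refine mul_le_mul_of_nonneg_right ?_ hlog0
              exact_mod_cast hnum
          _ = mE * w (m * n) := by
              rw [hw, hmE]
              push_cast [EReal.coe_mul]
              rw [mul_assoc]
    -- limsup manipulation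
    have step2 : (Filter.atTop.limsup fun n : ℕ => ((((n : ℝ) ^ s)⁻¹ : ℝ) : EReal) *
        ENNReal.log (⨆ (x : X) (k : ℕ) (_ : n ≤ k), sepMax (T^[m]) n ε ((T^[m])^[k] ⁻¹' {x})))
        ≤ Filter.atTop.limsup fun n : ℕ => mE * w (m * n) :=
      limsup_le_limsup (Eventually.of_forall step1)
    have hmono : Monotone (fun x : EReal => mE * x) :=
      fun a b h => mul_le_mul_of_nonneg_left h hm0E
    have hcont : Continuous (fun x : EReal => mE * x) :=
      EReal.continuous_const_mul' (c := (m : ℝ)) (by exact_mod_cast hm.ne')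
    have step3 : (Filter.atTop.limsup fun n : ℕ => mE * w (m * n)) =
        mE * Filter.atTop.limsup (fun n : ℕ => w (m * n)) := by
      have := hmono.map_limsup_of_continuousAt (F := atTop) (a := fun n : ℕ => w (m * n))
        (hcont.continuousAt)
      exact this.symm
    have hg : Tendsto (fun n : ℕ => m * n) atTop atTop := by
      refine tendsto_atTop_atTop.2 fun b => ⟨b, fun a ha => ?_⟩
      calc b ≤ a := ha
        _ ≤ m * a := Nat.le_mul_of_pos_left a hm
    have step4 : Filter.atTop.limsup (fun n : ℕ => w (m * n)) ≤ Filter.atTop.limsup w := by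
      have heq : Filter.atTop.limsup (fun n : ℕ => w (m * n)) =
          Filter.limsup w (Filter.map (fun n : ℕ => m * n) atTop) := by
        rw [Filter.limsup, Filter.limsup, Filter.map_map]
        rfl
      rw [heq]
      exact limsup_le_limsup_of_le hg
    have step5 : Filter.atTop.limsup w ≤ preEnt T s := by
      exact le_iSup₂ (f := fun (ε : ℝ) (_ : 0 < ε) => Filter.atTop.limsup fun n : ℕ =>
        ((((n : ℝ) ^ s)⁻¹ : ℝ) : EReal) * ENNReal.log (⨆ (x : X) (k : ℕ) (_ : n ≤ k),
          sepMax T n ε (T^[k] ⁻¹' {x}))) ε hε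
    calc (Filter.atTop.limsup fun n : ℕ => ((((n : ℝ) ^ s)⁻¹ : ℝ) : EReal) *
          ENNReal.log (⨆ (x : X) (k : ℕ) (_ : n ≤ k), sepMax (T^[m]) n ε ((T^[m])^[k] ⁻¹' {x})))
        ≤ mE * Filter.atTop.limsup (fun n : ℕ => w (m * n)) := step2.trans step3.le
      _ ≤ mE * Filter.atTop.limsup w := mul_le_mul_of_nonneg_left step4 hm0E
      _ ≤ mE * preEnt T s := mul_le_mul_of_nonneg_left step5 hm0E
end

section
/- For every m ∈ ℕ and every s > 0, the s-preimage entropy of the m-th iterate satisfies D_pre(s,T^m) ≥ m^s · D_pre(s,T). -/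
open Filter Set
open scoped ENNReal
open scoped Topology

variable {X : Type*}

/-- The `s`-preimage entropy defined via minimal spanning set cardinalities. -/
noncomputable def preEntSpan [PseudoMetricSpace X] (T : X → X) (s : ℝ) : EReal :=
  ⨆ (ε : ℝ) (_ : 0 < ε), Filter.atTop.limsup fun n : ℕ =>
    (((((n : ℝ) ^ s)⁻¹ : ℝ) : EReal)) *
      ENNReal.log (⨆ (x : X) (k : ℕ) (_ : n ≤ k), spanMin T n ε (T^[k] ⁻¹' {x}))

/-- Preimage entropy dimension via the spanning-set formulation. -/
noncomputable def preDimSpan [PseudoMetricSpace X] (T : X → X) : ℝ≥0∞ :=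
  ⨅ (s : ℝ) (_ : 0 < s ∧ preEntSpan T s = 0), ENNReal.ofReal s

namespace PreEntAux

lemma ereal_mul_le_iff {r : ℝ} (hr : 0 < r) {x y : EReal} :
    (r : EReal) * x ≤ y ↔ x ≤ y / (r : EReal) := by
  rw [EReal.le_div_iff_mul_le (by exact_mod_cast hr) (by simp), EReal.mul_comm]

section Pseudo
variable [PseudoMetricSpace X] {T S : X → X}

lemma dist_le_bowen {n : ℕ} {j : ℕ} (hj : j < n) (x y : X) :
    dist (T^[j] x) (T^[j] y) ≤ bowenDist T n x y :=
  le_ciSup (α := ℝ) (f := fun j : Fin n => dist (T^[(j:ℕ)] x) (T^[(j:ℕ)] y))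
    (Set.finite_range _).bddAbove (⟨j, hj⟩ : Fin n)

lemma bowen_le {n : ℕ} {x y : X} {r : ℝ} (hr : 0 ≤ r)
    (h : ∀ j < n, dist (T^[j] x) (T^[j] y) ≤ r) : bowenDist T n x y ≤ r := by
  rcases Nat.eq_zero_or_pos n with rfl | hn
  · simp [bowenDist, Real.iSup_of_isEmpty, hr]
  · have : Nonempty (Fin n) := ⟨⟨0, hn⟩⟩
    exact ciSup_le fun j => h j j.2

lemma bowen_nonneg {n : ℕ} {x y : X} : 0 ≤ bowenDist T n x y := by
  rcases Nat.eq_zero_or_pos n with rfl | hn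
  · simp [bowenDist, Real.iSup_of_isEmpty]
  · exact le_trans dist_nonneg (dist_le_bowen hn x y)

lemma bowen_symm {n : ℕ} (x y : X) : bowenDist T n x y = bowenDist T n y x := by
  unfold bowenDist; simp_rw [dist_comm]

lemma bowen_triangle {n : ℕ} (x y z : X) :
    bowenDist T n x z ≤ bowenDist T n x y + bowenDist T n y z := by
  refine bowen_le (add_nonneg bowen_nonneg bowen_nonneg) fun j hj => ?_
  exact (dist_triangle _ _ _).trans (add_le_add (dist_le_bowen hj _ _) (dist_le_bowen hj _ _))

lemma bowen_mono {n N : ℕ} (h : n ≤ N) (x y : X) :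
    bowenDist T n x y ≤ bowenDist T N x y :=
  bowen_le bowen_nonneg fun j hj => dist_le_bowen (lt_of_lt_of_le hj h) x y

lemma spanMin_mono_time {n N : ℕ} (h : n ≤ N) (ε : ℝ) (K : Set X) :
    spanMin T n ε K ≤ spanMin T N ε K := by
  refine le_iInf fun E => le_iInf fun hE => ?_
  refine iInf₂_le E ⟨hE.1, fun x hx => ?_⟩
  obtain ⟨y, hy, hd⟩ := hE.2 x hx
  exact ⟨y, hy, le_trans (bowen_mono h x y) hd⟩

lemma spanMin_subset_le {n : ℕ} {δ : ℝ} {K K' : Set X} (hK : K ⊆ K') :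
    spanMin T n (2 * δ) K ≤ spanMin T n δ K' := by
  classical
  refine le_iInf fun E' => le_iInf fun hE' => ?_
  rcases K.eq_empty_or_nonempty with rfl | ⟨x₀, hx₀⟩
  · refine le_trans (iInf₂_le ∅ ⟨by simp, by simp⟩) (by simp)
  · set f : X → X := fun y =>
      if h : ∃ z ∈ K, bowenDist T n z y ≤ δ then h.choose else x₀ with hf
    have hfK : ∀ y, f y ∈ K := by
      intro y
      rw [hf]; dsimp only
      split
      · next h => exact h.choose_spec.1
      · exact hx₀
    have hspan : IsPreSpanning T n (2 * δ) K ↑(E'.image f) := by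
      constructor
      · intro z hz
        simp only [Finset.coe_image, Set.mem_image] at hz
        obtain ⟨y, _, rfl⟩ := hz
        exact hfK y
      · intro x hx
        obtain ⟨y, hy, hd⟩ := hE'.2 x (hK hx)
        have hex : ∃ z ∈ K, bowenDist T n z y ≤ δ := ⟨x, hx, hd⟩
        refine ⟨f y, by simp only [Finset.coe_image]; exact Set.mem_image_of_mem f hy, ?_⟩
        have hfy : bowenDist T n (f y) y ≤ δ := by
          rw [hf]; dsimp only; rw [dif_pos hex]; exact hex.choose_spec.2
        calc bowenDist T n x (f y) ≤ bowenDist T n x y + bowenDist T n y (f y) :=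
              bowen_triangle x y (f y)
          _ ≤ δ + δ := add_le_add hd (by rwa [bowen_symm])
          _ = 2 * δ := by ring
    exact le_trans (iInf₂_le (E'.image f) hspan)
      (by exact_mod_cast Nat.cast_le.2 Finset.card_image_le)

lemma spanMin_transfer {n N : ℕ} {δ ε : ℝ} {K : Set X}
    (h : ∀ x y : X, bowenDist S n x y ≤ δ → bowenDist T N x y ≤ ε) :
    spanMin T N ε K ≤ spanMin S n δ K := by
  refine le_iInf fun E => le_iInf fun hE => ?_
  refine iInf₂_le E ⟨hE.1, fun x hx => ?_⟩
  obtain ⟨y, hy, hd⟩ := hE.2 x hx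
  exact ⟨y, hy, h x y hd⟩

/-- Transfer of Bowen distances from `T^[m]` to `T`. -/
lemma bowen_iterate_transfer {m : ℕ} (hm : 0 < m) {δ η : ℝ} (hη : 0 ≤ η)
    (hδ : ∀ x y : X, dist x y ≤ δ → ∀ r < m, dist (T^[r] x) (T^[r] y) ≤ η)
    (n₁ : ℕ) (x y : X) (h : bowenDist (T^[m]) n₁ x y ≤ δ) :
    bowenDist T (m * n₁) x y ≤ η := by
  refine bowen_le hη fun j hj => ?_
  have hq : j / m < n₁ := Nat.div_lt_of_lt_mul hj
  have hjd : T^[j] x = T^[j % m] ((T^[m])^[j / m] x) := by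
    conv_lhs => rw [← Nat.mod_add_div j m, Function.iterate_add_apply, Function.iterate_mul]
  have hjd' : T^[j] y = T^[j % m] ((T^[m])^[j / m] y) := by
    conv_lhs => rw [← Nat.mod_add_div j m, Function.iterate_add_apply, Function.iterate_mul]
  rw [hjd, hjd']
  refine hδ _ _ (le_trans (dist_le_bowen hq x y) h) _ (Nat.mod_lt _ hm)

lemma le_mul_div_succ {m k : ℕ} (hm : 0 < m) : k ≤ m * (k / m + 1) :=
  calc k = m * (k / m) + k % m := (Nat.div_add_mod k m).symm
    _ ≤ m * (k / m) + m := Nat.add_le_add_left (Nat.mod_lt k hm).le _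
    _ = m * (k / m + 1) := by ring

/-- The key combinatorial inequality between the spanning suprema for `T` and `T^[m]`. -/
lemma key_sup_le {m : ℕ} (hm : 0 < m) {ε δ : ℝ}
    (hδ : ∀ x y : X, dist x y ≤ δ → ∀ r < m, dist (T^[r] x) (T^[r] y) ≤ ε / 2)
    (hε : 0 < ε) (n : ℕ) :
    (⨆ (x : X) (k : ℕ) (_ : n ≤ k), spanMin T n ε (T^[k] ⁻¹' {x})) ≤
      ⨆ (x : X) (k : ℕ) (_ : n / m + 1 ≤ k),
        spanMin (T^[m]) (n / m + 1) δ ((T^[m])^[k] ⁻¹' {x}) := by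
  refine iSup_le fun x => iSup_le fun k => iSup_le fun hk => ?_
  set n₁ := n / m + 1 with hn₁
  set k₂ := k / m + 1 with hk₂
  have hk₂n₁ : n₁ ≤ k₂ := Nat.succ_le_succ (Nat.div_le_div_right hk)
  have hkm : k ≤ m * k₂ := le_mul_div_succ hm
  have hnm : n ≤ m * n₁ := le_mul_div_succ hm
  set x'' := T^[m * k₂ - k] x with hx''
  have hsub : T^[k] ⁻¹' {x} ⊆ T^[m * k₂] ⁻¹' {x''} := by
    intro z hz
    simp only [Set.mem_preimage, Set.mem_singleton_iff] at hz ⊢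
    rw [show m * k₂ = (m * k₂ - k) + k from (Nat.sub_add_cancel hkm).symm,
      Function.iterate_add_apply, hz]
  calc spanMin T n ε (T^[k] ⁻¹' {x})
      ≤ spanMin T (m * n₁) ε (T^[k] ⁻¹' {x}) := spanMin_mono_time hnm ε _
    _ = spanMin T (m * n₁) (2 * (ε / 2)) (T^[k] ⁻¹' {x}) := by rw [show (2:ℝ) * (ε/2) = ε by ring]
    _ ≤ spanMin T (m * n₁) (ε / 2) (T^[m * k₂] ⁻¹' {x''}) := spanMin_subset_le hsub
    _ ≤ spanMin (T^[m]) n₁ δ (T^[m * k₂] ⁻¹' {x''}) :=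
        spanMin_transfer (bowen_iterate_transfer hm (half_pos hε).le hδ n₁)
    _ = spanMin (T^[m]) n₁ δ ((T^[m])^[k₂] ⁻¹' {x''}) := by rw [Function.iterate_mul]
    _ ≤ _ := le_iSup_of_le x''
          (le_iSup₂_of_le (f := fun (k : ℕ) (_ : n₁ ≤ k) =>
            spanMin (T^[m]) n₁ δ ((T^[m])^[k] ⁻¹' {x''})) k₂ hk₂n₁ le_rfl)

end Pseudo

end PreEntAux

section CompactAux
variable [MetricSpace X] [CompactSpace X] {T : X → X}

lemma PreEntAux.uc_aux (hT : Continuous T) {m : ℕ} {η : ℝ} (hη : 0 < η) :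
    ∃ δ > 0, ∀ x y : X, dist x y ≤ δ → ∀ r < m, dist (T^[r] x) (T^[r] y) ≤ η := by
  have hΦ : Continuous fun x : X => fun r : Fin m => T^[(r : ℕ)] x :=
    continuous_pi fun r => hT.iterate (r : ℕ)
  have hU := CompactSpace.uniformContinuous_of_continuous hΦ
  obtain ⟨δ, hδ0, hδ⟩ := Metric.uniformContinuous_iff.1 hU η hη
  refine ⟨δ / 2, half_pos hδ0, fun x y hxy r hr => ?_⟩
  have := hδ (a := x) (b := y) (lt_of_le_of_lt hxy (half_lt_self hδ0))
  calc dist (T^[r] x) (T^[r] y)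
      = dist ((fun r : Fin m => T^[(r : ℕ)] x) ⟨r, hr⟩)
          ((fun r : Fin m => T^[(r : ℕ)] y) ⟨r, hr⟩) := rfl
    _ ≤ dist (fun r : Fin m => T^[(r : ℕ)] x) (fun r : Fin m => T^[(r : ℕ)] y) :=
        dist_le_pi_dist (X := fun _ : Fin m => X) (fun r : Fin m => T^[(r : ℕ)] x)
          (fun r : Fin m => T^[(r : ℕ)] y) (⟨r, hr⟩ : Fin m)
    _ ≤ η := this.le

end CompactAux

lemma PreEntAux.tendsto_div_succ_div {m : ℕ} (hm : 0 < m) :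
    Filter.Tendsto (fun n : ℕ => (((n / m + 1 : ℕ) : ℝ)) / (n : ℝ)) atTop (𝓝 (1 / (m : ℝ))) := by
  have hm' : (0:ℝ) < (m:ℝ) := Nat.cast_pos.2 hm
  have hup : Filter.Tendsto (fun n : ℕ => 1 / (m:ℝ) + 1 / (n:ℝ)) atTop (𝓝 (1 / (m:ℝ))) := by
    simpa using (tendsto_const_nhds : Filter.Tendsto (fun _ : ℕ => 1 / (m:ℝ)) atTop (𝓝 (1 / (m:ℝ)))).add (tendsto_one_div_atTop_nhds_zero_nat : Filter.Tendsto (fun n : ℕ => 1 / (n:ℝ)) atTop (𝓝 0))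
  refine tendsto_of_tendsto_of_tendsto_of_le_of_le' tendsto_const_nhds hup ?_ ?_
  · filter_upwards [eventually_ge_atTop 1] with n hn
    have hn0 : (0:ℝ) < (n:ℝ) := by exact_mod_cast hn
    rw [div_le_div_iff₀ hm' hn0]
    have : (n:ℝ) ≤ (m:ℝ) * ((n / m + 1 : ℕ) : ℝ) := by
      exact_mod_cast PreEntAux.le_mul_div_succ hm
    nlinarith
  · filter_upwards [eventually_ge_atTop 1] with n hn
    have hn0 : (0:ℝ) < (n:ℝ) := by exact_mod_cast hn
    have h1 : ((n / m : ℕ) : ℝ) ≤ (n:ℝ) / (m:ℝ) := Nat.cast_div_le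
    have h2 : ((n / m + 1 : ℕ) : ℝ) ≤ (n:ℝ) / (m:ℝ) + 1 := by push_cast; linarith
    have h3 : ((n:ℝ) / (m:ℝ) + 1) / (n:ℝ) = 1 / (m:ℝ) + 1 / (n:ℝ) := by
      field_simp
    calc ((n / m + 1 : ℕ) : ℝ) / (n:ℝ) ≤ ((n:ℝ) / (m:ℝ) + 1) / (n:ℝ) := by
          gcongr
      _ = 1 / (m:ℝ) + 1 / (n:ℝ) := h3

theorem preEntSpan_iterate_ge {X : Type*} [MetricSpace X] [CompactSpace X]
    {T : X → X} (hT : Continuous T) (m : ℕ) (hm : 0 < m) (s : ℝ) (hs : 0 < s) :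
    ((((m : ℝ) ^ s : ℝ)) : EReal) * preEntSpan T s ≤ preEntSpan (T^[m]) s := by
  have hm' : (0:ℝ) < (m:ℝ) := Nat.cast_pos.2 hm
  set M : ℝ := (m:ℝ) ^ s with hMdef
  have hM0 : 0 < M := Real.rpow_pos_of_pos hm' s
  rw [PreEntAux.ereal_mul_le_iff hM0]
  unfold preEntSpan
  refine iSup_le fun ε => iSup_le fun hε => ?_
  rw [← PreEntAux.ereal_mul_le_iff hM0]
  obtain ⟨δ, hδ0, hδ⟩ := PreEntAux.uc_aux hT (m := m) (half_pos hε)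
  refine le_trans ?_ (le_iSup₂ (f := fun (ε' : ℝ) (_ : 0 < ε') =>
    Filter.atTop.limsup fun n : ℕ =>
      (((((n : ℝ) ^ s)⁻¹ : ℝ) : EReal)) *
        ENNReal.log (⨆ (x : X) (k : ℕ) (_ : n ≤ k),
          spanMin (T^[m]) n ε' ((T^[m])^[k] ⁻¹' {x}))) δ hδ0)
  set B : ℕ → ℝ≥0∞ := fun j => ⨆ (x : X) (k : ℕ) (_ : j ≤ k),
    spanMin (T^[m]) j δ ((T^[m])^[k] ⁻¹' {x}) with hB
  set b : ℕ → EReal := fun j =>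
    (((((j : ℝ) ^ s)⁻¹ : ℝ) : EReal)) * ENNReal.log (B j) with hb
  refine EReal.le_of_forall_lt_iff_le.1 fun z hz => ?_
  obtain ⟨y, hy1, hy2⟩ := EReal.exists_between_coe_real hz
  have hev1 : ∀ᶠ j in atTop, b j < (y : EReal) := eventually_lt_of_limsup_lt hy1
  have htop : Filter.Tendsto (fun n : ℕ => n / m + 1) atTop atTop := by
    refine Filter.tendsto_atTop_atTop.2 fun c => ⟨m * c, fun n hn => ?_⟩
    have h := Nat.div_le_div_right (c := m) hn
    rw [Nat.mul_div_cancel_left c hm] at h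
    exact Nat.le_succ_of_le h
  have hev1' : ∀ᶠ n in atTop, b (n / m + 1) < (y : EReal) := htop.eventually hev1
  have hg : Filter.Tendsto (fun n : ℕ => ((((n / m + 1 : ℕ) : ℝ)) / (n:ℝ)) ^ s * y) atTop
      (𝓝 ((1 / (m:ℝ)) ^ s * y)) :=
    ((PreEntAux.tendsto_div_succ_div hm).rpow_const (Or.inr hs.le)).mul_const y
  have hlim_lt : (1 / (m:ℝ)) ^ s * y < z / M := by
    have hyz : y < z := EReal.coe_lt_coe_iff.1 hy2
    rw [one_div, Real.inv_rpow hm'.le, ← hMdef, inv_mul_eq_div, div_lt_div_iff₀ hM0 hM0]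
    nlinarith
  have hev2 : ∀ᶠ n in atTop, ((((n / m + 1 : ℕ) : ℝ)) / (n:ℝ)) ^ s * y < z / M :=
    hg.eventually_lt_const hlim_lt
  rw [PreEntAux.ereal_mul_le_iff hM0,
    show ((z : EReal)) / (M : EReal) = ((z / M : ℝ) : EReal) from (EReal.coe_div z M).symm]
  refine limsup_le_of_le (by isBoundedDefault) ?_
  filter_upwards [hev1', hev2, eventually_ge_atTop 1] with n hbn hgn hn1
  set n₁ : ℕ := n / m + 1 with hn₁def
  have hn₁pos : (0:ℝ) < (n₁ : ℝ) := by positivity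
  have hns : (0:ℝ) < (n:ℝ) := by exact_mod_cast hn1
  have hr : (0:ℝ) < (((n₁:ℝ)) ^ s)⁻¹ := by positivity
  have hA : ENNReal.log (⨆ (x : X) (k : ℕ) (_ : n ≤ k), spanMin T n ε (T^[k] ⁻¹' {x})) ≤
      ENNReal.log (B n₁) :=
    ENNReal.log_monotone (PreEntAux.key_sup_le hm hδ hε n)
  have hBle : ENNReal.log (B n₁) ≤ ((y / (((n₁:ℝ)) ^ s)⁻¹ : ℝ) : EReal) := by
    have h' := hbn.le
    rw [hb] at h'
    rw [PreEntAux.ereal_mul_le_iff hr] at h'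
    exact h'.trans_eq (EReal.coe_div _ _).symm
  have hc0 : (0 : EReal) ≤ ((((n:ℝ) ^ s)⁻¹ : ℝ) : EReal) := by
    exact_mod_cast (by positivity : (0:ℝ) ≤ ((n:ℝ) ^ s)⁻¹)
  calc (((((n:ℝ) ^ s)⁻¹ : ℝ) : EReal)) *
        ENNReal.log (⨆ (x : X) (k : ℕ) (_ : n ≤ k), spanMin T n ε (T^[k] ⁻¹' {x}))
      ≤ (((((n:ℝ) ^ s)⁻¹ : ℝ) : EReal)) * ENNReal.log (B n₁) :=
        mul_le_mul_of_nonneg_left hA hc0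
    _ ≤ (((((n:ℝ) ^ s)⁻¹ : ℝ) : EReal)) * ((y / (((n₁:ℝ)) ^ s)⁻¹ : ℝ) : EReal) :=
        mul_le_mul_of_nonneg_left hBle hc0
    _ = ((((n:ℝ) ^ s)⁻¹ * (y / (((n₁:ℝ)) ^ s)⁻¹) : ℝ) : EReal) := (EReal.coe_mul _ _).symm
    _ ≤ ((z / M : ℝ) : EReal) := by
        rw [EReal.coe_le_coe_iff]
        have h1 : ((n:ℝ) ^ s) ≠ 0 := by positivity
        have h2 : (((n₁:ℝ)) ^ s) ≠ 0 := by positivity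
        have heq : ((n:ℝ) ^ s)⁻¹ * (y / (((n₁:ℝ)) ^ s)⁻¹) = (((n₁:ℝ)) / (n:ℝ)) ^ s * y := by
          rw [Real.div_rpow hn₁pos.le hns.le]
          field_simp
        rw [heq]
        exact hgn.le
end

section
/- Topologically conjugate systems have equal s-preimage entropy: if π : X → Y is a homeomorphism with π ∘ T₁ = T₂ ∘ π, then D_pre(s,T₁) = D_pre(s,T₂) for all s > 0, and hence D_pre(T₁) = D_pre(T₂). -/
open Filter Set
open scoped ENNReal

variable {X : Type*}

lemma preEnt_le_of_conj {X Y : Type*} [MetricSpace X] [CompactSpace X]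
    [MetricSpace Y] [CompactSpace Y] {T₁ : X → X} {T₂ : Y → Y}
    (π : X ≃ₜ Y) (hconj : ∀ x : X, π (T₁ x) = T₂ (π x)) (s : ℝ) :
    preEnt T₂ s ≤ preEnt T₁ s := by
  classical
  have hit : ∀ (j : ℕ) (x : X), π (T₁^[j] x) = T₂^[j] (π x) := by
    intro j
    induction j with
    | zero => intro x; simp
    | succ m ih =>
      intro x
      rw [Function.iterate_succ_apply', Function.iterate_succ_apply', hconj, ih]
  refine iSup₂_le fun ε hε => ?_
  obtain ⟨δ, hδ, hδε⟩ := Metric.uniformContinuous_iff.mp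
    (CompactSpace.uniformContinuous_of_continuous π.continuous) ε hε
  refine le_iSup₂_of_le (δ/2) (by positivity) ?_
  refine Filter.limsup_le_limsup (Filter.Eventually.of_forall fun n => ?_)
  have hc : (0 : EReal) ≤ ((((n : ℝ) ^ s)⁻¹ : ℝ) : EReal) := by
    exact_mod_cast inv_nonneg.mpr (Real.rpow_nonneg n.cast_nonneg s)
  refine mul_le_mul_of_nonneg_left ?_ hc
  rw [ENNReal.log_le_log_iff]
  refine iSup_le fun y => iSup_le fun k => iSup_le fun hk => ?_
  refine le_iSup_of_le (π.symm y) (le_iSup_of_le k (le_iSup_of_le hk ?_))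
  refine iSup₂_le fun E hE => ?_
  refine le_iSup₂_of_le (E.image π.symm) ⟨?_, ?_⟩ ?_
  · intro a ha
    simp only [Finset.coe_image, Set.mem_image, Finset.mem_coe] at ha
    obtain ⟨b, hb, rfl⟩ := ha
    have h1 := hE.1 hb
    simp only [Set.mem_preimage, Set.mem_singleton_iff] at h1 ⊢
    have h2 := hit k (π.symm b)
    rw [π.apply_symm_apply] at h2
    rw [← π.symm_apply_apply (T₁^[k] (π.symm b)), h2, h1]
  · intro a ha b hb hab
    simp only [Finset.coe_image, Set.mem_image, Finset.mem_coe] at ha hb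
    obtain ⟨a', ha', rfl⟩ := ha
    obtain ⟨b', hb', rfl⟩ := hb
    have hne : a' ≠ b' := fun h => hab (by rw [h])
    have hsep := hE.2 a' ha' b' hb' hne
    rcases Nat.eq_zero_or_pos n with hn | hn
    · exfalso
      subst hn
      rw [bowenDist, Real.iSup_of_isEmpty] at hsep
      linarith
    · haveI : Nonempty (Fin n) := ⟨⟨0, hn⟩⟩
      obtain ⟨j, hj⟩ := exists_lt_of_lt_ciSup hsep
      have ha2 : T₂^[(j:ℕ)] a' = π (T₁^[(j:ℕ)] (π.symm a')) := by
        rw [hit, π.apply_symm_apply]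
      have hb2 : T₂^[(j:ℕ)] b' = π (T₁^[(j:ℕ)] (π.symm b')) := by
        rw [hit, π.apply_symm_apply]
      rw [ha2, hb2] at hj
      have hdist : δ ≤ dist (T₁^[(j:ℕ)] (π.symm a')) (T₁^[(j:ℕ)] (π.symm b')) := by
        by_contra h
        push_neg at h
        exact absurd (hδε h) (not_lt.mpr hj.le)
      have hb3 : dist (T₁^[(j:ℕ)] (π.symm a')) (T₁^[(j:ℕ)] (π.symm b'))
          ≤ bowenDist T₁ n (π.symm a') (π.symm b') := by
        rw [bowenDist]
        exact le_ciSup (f := fun j : Fin n => dist (T₁^[(j:ℕ)] (π.symm a')) (T₁^[(j:ℕ)] (π.symm b'))) (Set.Finite.bddAbove (Set.finite_range _)) j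
      linarith
  · rw [Finset.card_image_of_injective _ π.symm.injective]


theorem preEnt_of_conjugacy {X Y : Type*} [MetricSpace X] [CompactSpace X]
    [MetricSpace Y] [CompactSpace Y] {T₁ : X → X} {T₂ : Y → Y}
    (hT₁ : Continuous T₁) (hT₂ : Continuous T₂)
    (π : X ≃ₜ Y) (hconj : ∀ x : X, π (T₁ x) = T₂ (π x)) :
    (∀ s : ℝ, 0 < s → preEnt T₁ s = preEnt T₂ s) ∧ preDim T₁ = preDim T₂ := by
  have hconj' : ∀ y : Y, π.symm (T₂ y) = T₁ (π.symm y) := fun y => by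
    apply π.injective
    rw [π.apply_symm_apply, hconj, π.apply_symm_apply]
  have heq : ∀ s : ℝ, preEnt T₁ s = preEnt T₂ s := fun s =>
    le_antisymm (preEnt_le_of_conj π.symm hconj' s) (preEnt_le_of_conj π hconj s)
  refine ⟨fun s _ => heq s, ?_⟩
  unfold preDim
  exact iInf_congr fun s => by rw [heq s]
end
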